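/- For any ε > 0 there does not exist a conformal mapping φ of the unit disc B ⊂ ℝ² onto a bounded simply connected domain D ⊂ ℝ² with infinite geodesic diameter such that φ belongs to the Sobolev class L¹_{2+ε}(B). -/

import Mathlib

open MeasureTheory Filter Topology Set Metric ENNReal NNReal

noncomputable section

/-- The intrinsic (geodesic) distance in `D ⊆ X`: the infimum of lengths
(total variations) of curves in `D` joining `a` to `b`. -/
noncomputable def geoDistOn {X : Type*} [MetricSpace X] (D : Set X) (a b : X) : ℝ≥0∞ :=
  ⨅ (γ : ℝ → X) (_ : ContinuousOn γ (Set.Icc 0 1)) (_ : Set.MapsTo γ (Set.Icc 0 1) D)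
    (_ : γ 0 = a) (_ : γ 1 = b), eVariationOn γ (Set.Icc 0 1)

/-- The geodesic diameter of `D`. -/
noncomputable def geoDiamOn {X : Type*} [MetricSpace X] (D : Set X) : ℝ≥0∞ :=
  ⨆ a ∈ D, ⨆ b ∈ D, geoDistOn D a b

/-! ### Auxiliary lemmas -/

lemma evar_le_lintegral' {f f' : ℝ → ℂ} {a b : ℝ}
    (hd : ∀ t ∈ Set.Icc a b, HasDerivAt f (f' t) t)
    (hc : ContinuousOn f' (Set.Icc a b)) (hm : Measurable f') :
    eVariationOn f (Set.Icc a b) ≤ ∫⁻ t in Set.Ioc a b, ENNReal.ofReal ‖f' t‖ := by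
  set g : ℝ → ℝ≥0∞ := fun t => ENNReal.ofReal ‖f' t‖ with hg
  have hgm : Measurable g := (hm.norm).ennreal_ofReal
  refine iSup_le ?_
  rintro ⟨n, u, hu, us⟩
  have key : ∀ i, edist (f (u (i+1))) (f (u i)) ≤ ∫⁻ t in Set.Ioc (u i) (u (i+1)), g t := by
    intro i
    have hcd : u i ≤ u (i+1) := hu (Nat.le_succ i)
    have hsub : Set.Icc (u i) (u (i+1)) ⊆ Set.Icc a b :=
      Set.Icc_subset_Icc (us i).1 (us (i+1)).2
    have huIcc : Set.uIcc (u i) (u (i+1)) = Set.Icc (u i) (u (i+1)) := Set.uIcc_of_le hcd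
    have hint : IntervalIntegrable f' volume (u i) (u (i+1)) := by
      apply ContinuousOn.intervalIntegrable
      rw [huIcc]; exact hc.mono hsub
    have hftc : ∫ t in (u i)..(u (i+1)), f' t = f (u (i+1)) - f (u i) := by
      apply intervalIntegral.integral_eq_sub_of_hasDerivAt
      · intro t ht; rw [huIcc] at ht; exact hd t (hsub ht)
      · exact hint
    have h1 : ‖f (u (i+1)) - f (u i)‖ ≤ ∫ t in (u i)..(u (i+1)), ‖f' t‖ := by
      rw [← hftc]; exact intervalIntegral.norm_integral_le_integral_norm hcd
    have h2 : (∫ t in (u i)..(u (i+1)), ‖f' t‖) = ∫ t in Set.Ioc (u i) (u (i+1)), ‖f' t‖ :=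
      intervalIntegral.integral_of_le hcd
    have hInt : IntegrableOn (fun t => ‖f' t‖) (Set.Ioc (u i) (u (i+1))) volume := by
      apply IntegrableOn.mono_set (t := Set.Icc (u i) (u (i+1)))
      · exact ((hc.mono hsub).norm).integrableOn_compact isCompact_Icc
      · exact Set.Ioc_subset_Icc_self
    have h3 : ENNReal.ofReal (∫ t in Set.Ioc (u i) (u (i+1)), ‖f' t‖)
        = ∫⁻ t in Set.Ioc (u i) (u (i+1)), g t := by
      rw [hg]
      exact ofReal_integral_eq_lintegral_ofReal hInt
        (ae_of_all _ fun t => norm_nonneg _)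
    calc edist (f (u (i+1))) (f (u i)) = ENNReal.ofReal ‖f (u (i+1)) - f (u i)‖ := by
          rw [edist_dist, dist_eq_norm]
      _ ≤ ENNReal.ofReal (∫ t in Set.Ioc (u i) (u (i+1)), ‖f' t‖) := by
          apply ENNReal.ofReal_le_ofReal; rw [← h2]; exact h1
      _ = _ := h3
  calc ∑ i ∈ Finset.range n, edist (f (u (i+1))) (f (u i))
      ≤ ∑ i ∈ Finset.range n, ∫⁻ t in Set.Ioc (u i) (u (i+1)), g t :=
        Finset.sum_le_sum fun i _ => key i
    _ = ∑ i ∈ Finset.range n, (volume.withDensity g) (Set.Ioc (u i) (u (i+1))) := by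
        refine Finset.sum_congr rfl fun i _ => ?_
        rw [withDensity_apply _ measurableSet_Ioc]
    _ = (volume.withDensity g) (⋃ i ∈ Finset.range n, Set.Ioc (u i) (u (i+1))) := by
        refine (measure_biUnion_finset ?_ fun i _ => measurableSet_Ioc).symm
        intro i _ j _ hij
        have key2 : ∀ {i j : ℕ}, i < j →
            Disjoint (Set.Ioc (u i) (u (i+1))) (Set.Ioc (u j) (u (j+1))) := by
          intro i j h
          rw [Set.Ioc_disjoint_Ioc]
          exact le_max_of_le_right <| min_le_left _ _ |>.trans (hu (Nat.succ_le_of_lt h))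
        unfold Function.onFun
        rcases hij.lt_or_gt with h | h
        · exact key2 h
        · exact (key2 h).symm
    _ ≤ (volume.withDensity g) (Set.Ioc a b) := by
        apply measure_mono
        refine Set.iUnion₂_subset fun i _ => Set.Ioc_subset_Ioc (us i).1 (us (i+1)).2
    _ = _ := withDensity_apply _ measurableSet_Ioc

lemma seg_mem_ball {x m : ℂ} (hx : x ∈ Metric.ball (0:ℂ) 1) (hm : m ∈ Metric.ball (0:ℂ) 1)
    {t : ℝ} (ht : t ∈ Set.Icc (0:ℝ) 1) : x + t • (m - x) ∈ Metric.ball (0:ℂ) 1 := by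
  have : x + t • (m - x) = (1 - t) • x + t • m := by
    simp [smul_sub, sub_smul, one_smul]
    ring_nf
  rw [this]
  exact (convex_ball (0:ℂ) 1) hx hm (by linarith [ht.2]) ht.1 (by ring)

lemma cont_fderiv {φ : ℂ → ℂ} (hφ : DifferentiableOn ℂ φ (Metric.ball 0 1)) :
    ContinuousOn (fderiv ℝ φ) (Metric.ball (0:ℂ) 1) := by
  have h1 : AnalyticOnNhd ℂ φ (Metric.ball 0 1) := hφ.analyticOnNhd Metric.isOpen_ball
  have h2 : ContinuousOn (fderiv ℂ φ) (Metric.ball (0:ℂ) 1) := h1.fderiv.continuousOn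
  have h3 : ContinuousOn (fun z => (fderiv ℂ φ z).restrictScalars ℝ) (Metric.ball (0:ℂ) 1) :=
    ((ContinuousLinearMap.restrictScalarsIsometry ℂ ℂ ℂ ℝ ℝ).continuous).comp_continuousOn h2
  refine h3.congr fun z hz => ?_
  exact (hφ.differentiableAt (Metric.isOpen_ball.mem_nhds hz)).fderiv_restrictScalars ℝ

lemma segvar_le {φ : ℂ → ℂ} (hφ : DifferentiableOn ℂ φ (Metric.ball 0 1))
    {x m : ℂ} (hx : x ∈ Metric.ball (0:ℂ) 1) (hm : m ∈ Metric.ball (0:ℂ) 1) :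
    eVariationOn (φ ∘ (fun t : ℝ => x + t • (m - x))) (Set.Icc 0 1) ≤
      ∫⁻ t in Set.Ioc (0:ℝ) 1,
        ENNReal.ofReal (‖fderiv ℝ φ (x + t • (m - x))‖ * ‖m - x‖) := by
  set σ : ℝ → ℂ := fun t => x + t • (m - x) with hσdef
  have hσc : Continuous σ := by fun_prop
  have hσd : ∀ t : ℝ, HasDerivAt σ (m - x) t := fun t => by
    simpa [hσdef] using ((hasDerivAt_id t).smul_const (m - x)).const_add x
  set f' : ℝ → ℂ := fun t => (fderiv ℝ φ (σ t)) (m - x) with hf'def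
  have hdiff : ∀ t ∈ Set.Icc (0:ℝ) 1, DifferentiableAt ℂ φ (σ t) := fun t ht =>
    hφ.differentiableAt (Metric.isOpen_ball.mem_nhds (seg_mem_ball hx hm ht))
  have hd : ∀ t ∈ Set.Icc (0:ℝ) 1, HasDerivAt (φ ∘ σ) (f' t) t := by
    intro t ht
    have h1 : HasFDerivAt φ (fderiv ℝ φ (σ t)) (σ t) := by
      have := ((hdiff t ht).hasFDerivAt.restrictScalars ℝ)
      rwa [← (hdiff t ht).fderiv_restrictScalars ℝ] at this
    exact h1.comp_hasDerivAt t (hσd t)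
  have hc : ContinuousOn f' (Set.Icc 0 1) := by
    have : ContinuousOn (fun t => fderiv ℝ φ (σ t)) (Set.Icc (0:ℝ) 1) :=
      (cont_fderiv hφ).comp hσc.continuousOn (fun t ht => seg_mem_ball hx hm ht)
    exact (ContinuousLinearMap.apply ℝ ℂ (m - x)).continuous.comp_continuousOn this
  have hmeas : Measurable f' := by
    have h1 : Measurable (fun t => fderiv ℝ φ (σ t)) :=
      (measurable_fderiv ℝ φ).comp hσc.measurable
    exact (ContinuousLinearMap.apply ℝ ℂ (m - x)).continuous.measurable.comp h1
  refine (evar_le_lintegral' hd hc hmeas).trans (lintegral_mono fun t => ?_)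
  exact ENNReal.ofReal_le_ofReal ((fderiv ℝ φ (σ t)).le_opNorm (m - x))

lemma geo_le {φ : ℂ → ℂ} {D : Set ℂ} (hφc : ContinuousOn φ (Metric.ball 0 1))
    (hmapsD : Set.MapsTo φ (Metric.ball 0 1) D) {x y m : ℂ}
    (hx : x ∈ Metric.ball (0:ℂ) 1) (hy : y ∈ Metric.ball (0:ℂ) 1)
    (hm : m ∈ Metric.ball (0:ℂ) 1) :
    geoDistOn D (φ x) (φ y) ≤
      eVariationOn (φ ∘ (fun t : ℝ => x + t • (m - x))) (Set.Icc 0 1) +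
      eVariationOn (φ ∘ (fun t : ℝ => y + t • (m - y))) (Set.Icc 0 1) := by
  classical
  set σx : ℝ → ℂ := fun t => x + t • (m - x) with hσx
  set σy : ℝ → ℂ := fun t => y + t • (m - y) with hσy
  set γ : ℝ → ℂ := fun t => if t ≤ 1/2 then x + (2*t) • (m - x) else m + (2*t-1) • (y - m)
    with hγdef
  have hγc : Continuous γ := by
    apply Continuous.if_le
    · fun_prop
    · fun_prop
    · exact continuous_id
    · exact continuous_const
    · intro t ht
      subst ht
      norm_num
  have hγball : ∀ t ∈ Set.Icc (0:ℝ) 1, γ t ∈ Metric.ball (0:ℂ) 1 := by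
    intro t ht
    simp only [hγdef]
    split_ifs with h
    · exact seg_mem_ball hx hm ⟨by linarith [ht.1], by linarith⟩
    · push_neg at h
      exact seg_mem_ball hm hy ⟨by linarith, by linarith [ht.2]⟩
  have hsplit : eVariationOn (φ ∘ γ) (Set.Icc 0 (1/2)) + eVariationOn (φ ∘ γ) (Set.Icc (1/2) 1)
      = eVariationOn (φ ∘ γ) (Set.Icc 0 1) := by
    have := eVariationOn.Icc_add_Icc (φ ∘ γ) (s := (Set.univ : Set ℝ))
      (by norm_num : (0:ℝ) ≤ 1/2) (by norm_num : (1:ℝ)/2 ≤ 1) (Set.mem_univ _)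
    simpa using this
  have img1 : (fun t : ℝ => 2*t) '' Set.Icc 0 (1/2) = Set.Icc (0:ℝ) 1 := by
    ext s
    simp only [Set.mem_image, Set.mem_Icc]
    constructor
    · rintro ⟨t, ht, rfl⟩; constructor <;> linarith [ht.1, ht.2]
    · intro hs; exact ⟨s/2, ⟨by linarith [hs.1], by linarith [hs.2]⟩, by ring⟩
  have img2 : (fun t : ℝ => 2 - 2*t) '' Set.Icc (1/2) 1 = Set.Icc (0:ℝ) 1 := by
    ext s
    simp only [Set.mem_image, Set.mem_Icc]
    constructor
    · rintro ⟨t, ht, rfl⟩; constructor <;> linarith [ht.1, ht.2]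
    · intro hs; exact ⟨1 - s/2, ⟨by linarith [hs.2], by linarith [hs.1]⟩, by ring⟩
  have h1 : eVariationOn (φ ∘ γ) (Set.Icc 0 (1/2)) = eVariationOn (φ ∘ σx) (Set.Icc 0 1) := by
    have e1 : Set.EqOn (φ ∘ γ) ((φ ∘ σx) ∘ (fun t : ℝ => 2*t)) (Set.Icc 0 (1/2)) := by
      intro t ht
      simp only [Function.comp_apply, hγdef, hσx, if_pos ht.2]
    rw [eVariationOn.eq_of_eqOn e1,
      eVariationOn.comp_eq_of_monotoneOn (φ ∘ σx) (fun t : ℝ => 2*t)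
        (fun a _ b _ hab => by dsimp; linarith), img1]
  have h2 : eVariationOn (φ ∘ γ) (Set.Icc (1/2) 1) = eVariationOn (φ ∘ σy) (Set.Icc 0 1) := by
    have e2 : Set.EqOn (φ ∘ γ) ((φ ∘ σy) ∘ (fun t : ℝ => 2 - 2*t)) (Set.Icc (1/2) 1) := by
      intro t ht
      simp only [Function.comp_apply, hγdef, hσy]
      congr 1
      by_cases h : t ≤ 1/2
      · have : t = 1/2 := le_antisymm h ht.1
        subst this
        rw [if_pos le_rfl]
        simp [Complex.real_smul]
        ring
      · rw [if_neg h]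
        simp only [Complex.real_smul]
        push_cast
        ring
    rw [eVariationOn.eq_of_eqOn e2,
      eVariationOn.comp_eq_of_antitoneOn (φ ∘ σy) (fun t : ℝ => 2 - 2*t)
        (fun a _ b _ hab => by dsimp; linarith), img2]
  have hγ0 : (φ ∘ γ) 0 = φ x := by
    simp only [Function.comp_apply, hγdef]
    rw [if_pos (by norm_num : (0:ℝ) ≤ 1/2)]
    norm_num
  have hγ1 : (φ ∘ γ) 1 = φ y := by
    simp only [Function.comp_apply, hγdef]
    rw [if_neg (by norm_num : ¬ (1:ℝ) ≤ 1/2)]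
    norm_num
  calc geoDistOn D (φ x) (φ y) ≤ eVariationOn (φ ∘ γ) (Set.Icc 0 1) := by
        refine iInf_le_of_le (φ ∘ γ) ?_
        refine iInf_le_of_le (hφc.comp hγc.continuousOn (fun t ht => hγball t ht)) ?_
        refine iInf_le_of_le (fun t ht => hmapsD (hγball t ht)) ?_
        exact iInf_le_of_le hγ0 (iInf_le_of_le hγ1 le_rfl)
    _ = _ := by rw [← hsplit, h1, h2]

lemma scaling {g : ℂ → ℝ≥0∞} (hg : Measurable g) {p : ℝ}
    {x : ℂ} (hx : x ∈ Metric.ball (0:ℂ) 1) {t : ℝ} (ht : t ∈ Set.Ioc (0:ℝ) 1) :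
    ∫⁻ m in Metric.ball (0:ℂ) (1/2), (g (x + t • (m - x))) ^ p ≤
      ENNReal.ofReal ((t^2)⁻¹) * ∫⁻ z in Metric.ball (0:ℂ) 1, g z ^ p := by
  set G : ℂ → ℝ≥0∞ := (Metric.ball (0:ℂ) 1).indicator (fun z => g z ^ p) with hG
  have hGm : Measurable G := ((hg.pow_const _).indicator measurableSet_ball)
  have step1 : ∫⁻ m in Metric.ball (0:ℂ) (1/2), (g (x + t • (m - x))) ^ p ≤
      ∫⁻ m, G (x + t • (m - x)) := by
    rw [← lintegral_indicator measurableSet_ball]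
    refine lintegral_mono fun m => ?_
    by_cases hm : m ∈ Metric.ball (0:ℂ) (1/2)
    · rw [Set.indicator_of_mem hm]
      have hmb : m ∈ Metric.ball (0:ℂ) 1 := Metric.ball_subset_ball (by norm_num) hm
      rw [hG, Set.indicator_of_mem (seg_mem_ball hx hmb ⟨ht.1.le, ht.2⟩)]
    · rw [Set.indicator_of_notMem hm]; exact zero_le
  have key : ∫⁻ m, G (x + t • (m - x)) = ENNReal.ofReal ((t^2)⁻¹) * ∫⁻ z, G z := by
    have e1 : ∀ m : ℂ, x + t • (m - x) = (x - t • x) + t • m := fun m => by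
      rw [smul_sub]; ring
    simp_rw [e1]
    have h2 : ∫⁻ m, G ((x - t • x) + t • m) = ∫⁻ z, G ((x - t • x) + z)
        ∂(Measure.map (t • · : ℂ → ℂ) volume) :=
      (lintegral_map (f := fun z => G ((x - t • x) + z)) (g := (t • · : ℂ → ℂ))
        (hGm.comp (measurable_const_add _)) (measurable_const_smul t)).symm
    rw [h2, Measure.map_addHaar_smul volume (ne_of_gt ht.1), lintegral_smul_measure,
      lintegral_add_left_eq_self (fun z => G z) (x - t • x)]
    congr 2
    rw [Complex.finrank_real_complex]
    rw [abs_of_nonneg (by positivity)]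
  have final : ∫⁻ z, G z = ∫⁻ z in Metric.ball (0:ℂ) 1, g z ^ p := by
    rw [hG, lintegral_indicator measurableSet_ball]
  calc _ ≤ ∫⁻ m, G (x + t • (m - x)) := step1
    _ = _ := by rw [key, final]

lemma inner_bound {g : ℂ → ℝ≥0∞} (hg : Measurable g) {p q : ℝ} (hpq : p.HolderConjugate q)
    {x : ℂ} (hx : x ∈ Metric.ball (0:ℂ) 1) {t : ℝ} (ht : t ∈ Set.Ioc (0:ℝ) 1) :
    ∫⁻ m in Metric.ball (0:ℂ) (1/2), g (x + t • (m - x)) ≤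
      ENNReal.ofReal ((t^2)⁻¹) ^ (1/p) *
        ((∫⁻ z in Metric.ball (0:ℂ) 1, g z ^ p) ^ (1/p) *
          (volume (Metric.ball (0:ℂ) (1/2))) ^ (1/q)) := by
  set U := Metric.ball (0:ℂ) (1/2)
  set f : ℂ → ℝ≥0∞ := fun m => g (x + t • (m - x)) with hf
  have hfm : Measurable f := hg.comp (by fun_prop)
  have hold := ENNReal.lintegral_mul_le_Lp_mul_Lq (volume.restrict U) hpq
    hfm.aemeasurable (aemeasurable_const (b := (1:ℝ≥0∞)))
  simp only [Pi.mul_apply, mul_one, ENNReal.one_rpow, lintegral_const,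
    Measure.restrict_apply MeasurableSet.univ, Set.univ_inter, one_mul] at hold
  refine hold.trans ?_
  have hscale := scaling hg (p := p) hx ht
  calc (∫⁻ m in U, f m ^ p) ^ (1/p) * (volume U) ^ (1/q)
      ≤ (ENNReal.ofReal ((t^2)⁻¹) * ∫⁻ z in Metric.ball (0:ℂ) 1, g z ^ p) ^ (1/p) *
        (volume U) ^ (1/q) :=
        mul_le_mul_left
          (ENNReal.rpow_le_rpow hscale (one_div_nonneg.mpr hpq.pos.le)) _
    _ = _ := by
        rw [ENNReal.mul_rpow_of_nonneg _ _ (one_div_nonneg.mpr hpq.pos.le), mul_assoc]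

lemma avg_bound {g : ℂ → ℝ≥0∞} (hg : Measurable g) {p q : ℝ} (hpq : p.HolderConjugate q)
    {x : ℂ} (hx : x ∈ Metric.ball (0:ℂ) 1) :
    ∫⁻ m in Metric.ball (0:ℂ) (1/2), ∫⁻ t in Set.Ioc (0:ℝ) 1, g (x + t • (m - x)) ≤
      (∫⁻ t in Set.Ioc (0:ℝ) 1, ENNReal.ofReal (((t^2)⁻¹) ^ (1/p))) *
        ((∫⁻ z in Metric.ball (0:ℂ) 1, g z ^ p) ^ (1/p) *
          (volume (Metric.ball (0:ℂ) (1/2))) ^ (1/q)) := by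
  set U := Metric.ball (0:ℂ) (1/2)
  set I := Set.Ioc (0:ℝ) 1
  set K := (∫⁻ z in Metric.ball (0:ℂ) 1, g z ^ p) ^ (1/p) *
    (volume (Metric.ball (0:ℂ) (1/2))) ^ (1/q) with hK
  have hswap : ∫⁻ m in U, ∫⁻ t in I, g (x + t • (m - x)) =
      ∫⁻ t in I, ∫⁻ m in U, g (x + t • (m - x)) := by
    apply lintegral_lintegral_swap
    exact (hg.comp (show Measurable fun z : ℂ × ℝ => x + z.2 • (z.1 - x) by fun_prop)).aemeasurable
  rw [hswap]
  have hw : Measurable fun t : ℝ => ENNReal.ofReal (((t^2)⁻¹) ^ (1/p)) := by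
    apply Measurable.ennreal_ofReal
    exact (Real.continuous_rpow_const (one_div_nonneg.mpr hpq.pos.le)).measurable.comp
      ((measurable_id.pow_const 2).inv)
  calc ∫⁻ t in I, ∫⁻ m in U, g (x + t • (m - x))
      ≤ ∫⁻ t in I, ENNReal.ofReal (((t^2)⁻¹) ^ (1/p)) * K := by
        refine setLIntegral_mono (hw.mul_const _) fun t ht => ?_
        have := inner_bound hg hpq hx ht
        rw [← ENNReal.ofReal_rpow_of_nonneg (by positivity)
          (one_div_nonneg.mpr hpq.pos.le)]
        exact this
    _ = _ := lintegral_mul_const _ hw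

lemma Ct_finite {p : ℝ} (hp : 2 < p) :
    (∫⁻ t in Set.Ioc (0:ℝ) 1, ENNReal.ofReal (((t^2)⁻¹) ^ (1/p))) ≠ ⊤ := by
  have hr : (-1 : ℝ) < -(2/p) := by
    have hp0 : (0:ℝ) < p := by linarith
    rw [neg_lt_neg_iff]
    rw [div_lt_one hp0]
    linarith
  have hint : IntegrableOn (fun t : ℝ => t ^ (-(2/p))) (Set.Ioc (0:ℝ) 1) volume :=
    (intervalIntegrable_iff_integrableOn_Ioc_of_le zero_le_one).mp
      (intervalIntegral.intervalIntegrable_rpow' hr)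
  have heq : ∀ t ∈ Set.Ioc (0:ℝ) 1,
      ENNReal.ofReal (((t^2)⁻¹) ^ (1/p)) = ENNReal.ofReal (t ^ (-(2/p))) := by
    intro t ht
    congr 1
    rw [← Real.rpow_natCast t 2, ← Real.rpow_neg ht.1.le, ← Real.rpow_mul ht.1.le]
    norm_num
    rw [div_eq_mul_inv]
  refine ne_of_lt ?_
  calc ∫⁻ t in Set.Ioc (0:ℝ) 1, ENNReal.ofReal (((t^2)⁻¹) ^ (1/p))
      = ∫⁻ t in Set.Ioc (0:ℝ) 1, ENNReal.ofReal (t ^ (-(2/p))) :=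
        setLIntegral_congr_fun measurableSet_Ioc heq
    _ ≤ ∫⁻ t in Set.Ioc (0:ℝ) 1, (‖t ^ (-(2/p))‖₊ : ℝ≥0∞) :=
        lintegral_mono fun t => Real.ofReal_le_enorm _
    _ < ⊤ := hint.2

/-! ### Main theorem -/

/-- Theorem C: for any `ε > 0` there is no conformal mapping (holomorphic bijection)
`φ` of the unit disc `B ⊆ ℝ² = ℂ` onto a bounded simply connected domain `D ⊆ ℂ` with
infinite geodesic diameter such that `φ` belongs to the Sobolev class `L¹_{2+ε}(B)`
(i.e. `∫_B ‖Dφ‖^{2+ε} < ∞`; for a holomorphic map the weak derivative coincides with the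
classical one). -/
theorem no_conformal_map_onto_infinite_geodesic_diameter_domain :
    ∀ ε : ℝ, 0 < ε →
      ¬ ∃ (φ : ℂ → ℂ) (D : Set ℂ),
        IsOpen D ∧ IsConnected D ∧ Bornology.IsBounded D ∧ SimplyConnectedSpace D ∧
        geoDiamOn D = ⊤ ∧
        DifferentiableOn ℂ φ (Metric.ball 0 1) ∧
        Set.BijOn φ (Metric.ball 0 1) D ∧
        (∫⁻ z in Metric.ball (0 : ℂ) 1,
          ENNReal.ofReal (‖fderiv ℝ φ z‖ ^ (2 + ε)) ∂volume) ≠ ⊤ := by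
  intro ε hε
  rintro ⟨φ, D, -, -, -, -, hdiam, hφ, hbij, hInt⟩
  set p : ℝ := 2 + ε with hpdef
  have hp2 : (2:ℝ) < p := by simp [hpdef]; linarith
  have hp1 : (1:ℝ) < p := by linarith
  have hpq : p.HolderConjugate (p.conjExponent) := Real.HolderConjugate.conjExponent hp1
  set q : ℝ := p.conjExponent with hqdef
  set g : ℂ → ℝ≥0∞ := fun z => ENNReal.ofReal ‖fderiv ℝ φ z‖ with hgdef
  have hgm : Measurable g := (measurable_fderiv ℝ φ).norm.ennreal_ofReal
  set Λ : ℝ≥0∞ := ∫⁻ z in Metric.ball (0:ℂ) 1, g z ^ p with hΛdef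
  have hΛ : Λ ≠ ⊤ := by
    have : Λ = ∫⁻ z in Metric.ball (0 : ℂ) 1,
        ENNReal.ofReal (‖fderiv ℝ φ z‖ ^ p) ∂volume := by
      refine lintegral_congr fun z => ?_
      exact ENNReal.ofReal_rpow_of_nonneg (norm_nonneg _) (by linarith)
    rw [this]; exact hInt
  set U := Metric.ball (0:ℂ) (1/2) with hUdef
  have hU0 : volume U ≠ 0 := (measure_ball_pos volume 0 (by norm_num)).ne'
  have hUtop : volume U ≠ ⊤ := measure_ball_lt_top.ne
  set K : ℝ≥0∞ := Λ ^ (1/p) * (volume U) ^ (1/q) with hKdef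
  set Ct : ℝ≥0∞ := ∫⁻ t in Set.Ioc (0:ℝ) 1, ENNReal.ofReal (((t^2)⁻¹) ^ (1/p)) with hCtdef
  set Cc : ℝ≥0∞ := Ct * K with hCcdef
  have hCc : Cc ≠ ⊤ := by
    apply ENNReal.mul_ne_top (Ct_finite hp2)
    exact ENNReal.mul_ne_top
      (ENNReal.rpow_ne_top_of_nonneg (one_div_nonneg.mpr hpq.pos.le) hΛ)
      (ENNReal.rpow_ne_top_of_nonneg (one_div_nonneg.mpr hpq.symm.pos.le) hUtop)
  set F : ℂ → ℂ → ℝ≥0∞ := fun x m => ∫⁻ t in Set.Ioc (0:ℝ) 1, g (x + t • (m - x)) with hFdef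
  have hFavg : ∀ x ∈ Metric.ball (0:ℂ) 1, ∫⁻ m in U, F x m ≤ Cc := fun x hx =>
    avg_bound hgm hpq hx
  have hFm : ∀ x : ℂ, Measurable fun m : ℂ => F x m := by
    intro x
    have hjoint : Measurable fun z : ℂ × ℝ => g (x + z.2 • (z.1 - x)) :=
      hgm.comp (by fun_prop)
    exact hjoint.lintegral_prod_right'
  set K2 : ℝ≥0∞ := (2 * Cc + 1) / volume U with hK2def
  have h2Cc : 2 * Cc + 1 ≠ ⊤ :=
    ENNReal.add_ne_top.mpr ⟨ENNReal.mul_ne_top (by norm_num) hCc, ENNReal.one_ne_top⟩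
  have hK2top : K2 ≠ ⊤ := (ENNReal.div_lt_top h2Cc hU0).ne
  have hsel : ∀ x ∈ Metric.ball (0:ℂ) 1, ∀ y ∈ Metric.ball (0:ℂ) 1,
      ∃ m ∈ U, F x m + F y m ≤ K2 := by
    intro x hx y hy
    by_contra hcon
    push_neg at hcon
    have h1 : K2 * volume U ≤ ∫⁻ m in U, (F x m + F y m) := by
      rw [← setLIntegral_const U K2]
      exact setLIntegral_mono' measurableSet_ball fun m hm => (hcon m hm).le
    have h2 : ∫⁻ m in U, (F x m + F y m) ≤ 2 * Cc := by
      rw [lintegral_add_left (hFm x)]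
      calc (∫⁻ m in U, F x m) + ∫⁻ m in U, F y m ≤ Cc + Cc :=
            add_le_add (hFavg x hx) (hFavg y hy)
        _ = 2 * Cc := (two_mul Cc).symm
    have h3 : K2 * volume U = 2 * Cc + 1 := ENNReal.div_mul_cancel hU0 hUtop
    rw [h3] at h1
    have hle : 2 * Cc + 1 ≤ 2 * Cc := h1.trans h2
    have hlt : 2 * Cc < 2 * Cc + 1 :=
      ENNReal.lt_add_right (ENNReal.mul_ne_top (by norm_num) hCc) one_ne_zero
    exact hlt.not_ge hle
  have hpair : ∀ a ∈ D, ∀ b ∈ D, geoDistOn D a b ≤ ENNReal.ofReal 2 * K2 := by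
    intro a ha b hb
    obtain ⟨x, hx, rfl⟩ := hbij.surjOn ha
    obtain ⟨y, hy, rfl⟩ := hbij.surjOn hb
    obtain ⟨m, hmU, hsum⟩ := hsel x hx y hy
    have hmball : m ∈ Metric.ball (0:ℂ) 1 := Metric.ball_subset_ball (by norm_num) hmU
    have ebound : ∀ w : ℂ, w ∈ Metric.ball (0:ℂ) 1 →
        eVariationOn (φ ∘ fun t : ℝ => w + t • (m - w)) (Set.Icc 0 1) ≤
          ENNReal.ofReal 2 * F w m := by
      intro w hw
      refine (segvar_le hφ hw hmball).trans ?_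
      have hmw : ‖m - w‖ ≤ 2 := by
        have h1 := mem_ball_zero_iff.mp hw
        have h2 := mem_ball_zero_iff.mp hmball
        calc ‖m - w‖ ≤ ‖m‖ + ‖w‖ := norm_sub_le _ _
          _ ≤ 2 := by linarith
      calc ∫⁻ t in Set.Ioc (0:ℝ) 1, ENNReal.ofReal (‖fderiv ℝ φ (w + t • (m - w))‖ * ‖m - w‖)
          ≤ ∫⁻ t in Set.Ioc (0:ℝ) 1, ENNReal.ofReal 2 * g (w + t • (m - w)) := by
            refine lintegral_mono fun t => ?_
            rw [ENNReal.ofReal_mul (norm_nonneg _), mul_comm]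
            exact mul_le_mul_left (ENNReal.ofReal_le_ofReal hmw) _
        _ = ENNReal.ofReal 2 * F w m :=
            lintegral_const_mul _ (hgm.comp (by fun_prop))
    calc geoDistOn D (φ x) (φ y)
        ≤ eVariationOn (φ ∘ fun t : ℝ => x + t • (m - x)) (Set.Icc 0 1) +
          eVariationOn (φ ∘ fun t : ℝ => y + t • (m - y)) (Set.Icc 0 1) :=
          geo_le hφ.continuousOn hbij.mapsTo hx hy hmball
      _ ≤ ENNReal.ofReal 2 * F x m + ENNReal.ofReal 2 * F y m :=
          add_le_add (ebound x hx) (ebound y hy)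
      _ = ENNReal.ofReal 2 * (F x m + F y m) := (mul_add _ _ _).symm
      _ ≤ ENNReal.ofReal 2 * K2 := mul_le_mul_right hsum _
  have hdle : geoDiamOn D ≤ ENNReal.ofReal 2 * K2 := by
    refine iSup₂_le fun a ha => iSup₂_le fun b hb => hpair a ha b hb
  rw [hdiam] at hdle
  exact (ENNReal.mul_ne_top ENNReal.ofReal_ne_top hK2top) (top_le_iff.mp hdle)

end
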